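/- Let Θ be a subset of d-dimensional Euclidean space, let x ∈ ℝ^d with dist(x, Θ) > 0, and let p : ℝ^d → ℝ^d be a map that is differentiable at x and satisfies, for every y in some neighborhood of x, that p(y) ∈ Θ and ‖y − p(y)‖ = dist(y, Θ). Then the distance function y ↦ dist(y, Θ) is differentiable at x, with derivative given by v ↦ ⟨(x − p(x))/‖x − p(x)‖, v⟩; that is, its gradient at x is the unit vector (x − p(x))/‖x − p(x)‖. -/

import Mathlib

open scoped RealInnerProductSpace

theorem aux_hasFDerivAt_norm {E : Type*} [NormedAddCommGroup E] [InnerProductSpace ℝ E]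
    (u : E) (hu : u ≠ 0) :
    HasFDerivAt (fun z : E => ‖z‖) (innerSL ℝ (‖u‖⁻¹ • u)) u := by
  have h1 : HasFDerivAt (fun z : E => ‖z‖ ^ 2) (2 • innerSL ℝ u) u :=
    (hasStrictFDerivAt_norm_sq u).hasFDerivAt
  have hsq : (0:ℝ) < ‖u‖ ^ 2 := pow_pos (norm_pos_iff.mpr hu) 2
  have h2 := (Real.hasDerivAt_sqrt hsq.ne').comp_hasFDerivAt u h1
  have heq : ((fun x : ℝ => Real.sqrt x) ∘ fun z : E => ‖z‖ ^ 2) = fun z : E => ‖z‖ := by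
    funext z; simp [Function.comp, Real.sqrt_sq (norm_nonneg z)]
  rw [heq] at h2
  refine h2.congr_fderiv ?_
  ext v
  simp only [ContinuousLinearMap.coe_smul', Pi.smul_apply, ContinuousLinearMap.smul_apply,
    innerSL_apply_apply, real_inner_smul_left, Real.sqrt_sq (norm_nonneg u), smul_eq_mul]
  have : ‖u‖ ≠ 0 := norm_ne_zero_iff.mpr hu
  field_simp
  ring

/-- Let `Θ ⊆ ℝ^d`, let `x` with `dist(x,Θ) > 0`, and let `p` be
differentiable at `x` such that for every `y` in a neighborhood of `x`, `p y ∈ Θ` and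
`‖y - p y‖ = dist(y, Θ)`. Then `y ↦ dist(y, Θ)` is differentiable at `x` with derivative
`v ↦ ⟨(x - p x)/‖x - p x‖, v⟩`, i.e. gradient the unit vector `(x - p x)/‖x - p x‖`. -/
theorem statement3 {d : ℕ} (Θ : Set (EuclideanSpace ℝ (Fin d)))
    (x : EuclideanSpace ℝ (Fin d))
    (hx : 0 < Metric.infDist x Θ)
    (p : EuclideanSpace ℝ (Fin d) → EuclideanSpace ℝ (Fin d))
    (p' : EuclideanSpace ℝ (Fin d) →L[ℝ] EuclideanSpace ℝ (Fin d))
    (hp : HasFDerivAt p p' x)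
    (hloc : ∀ᶠ y in nhds x, p y ∈ Θ ∧ ‖y - p y‖ = Metric.infDist y Θ) :
    HasFDerivAt (fun y => Metric.infDist y Θ)
      (innerSL ℝ (‖x - p x‖⁻¹ • (x - p x))) x := by
  have hself := hloc.self_of_nhds
  have hnorm : ‖x - p x‖ = Metric.infDist x Θ := hself.2
  have hu : x - p x ≠ 0 := by
    intro h
    rw [h, norm_zero] at hnorm
    exact hx.ne hnorm
  -- orthogonality: ⟪x - p x, p' v⟫ = 0
  have hperp : ∀ v, ⟪x - p x, p' v⟫ = 0 := by
    intro v
    have hline : Filter.Tendsto (fun t : ℝ => x + t • v) (nhds 0) (nhds x) := by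
      have hc : Continuous (fun t : ℝ => x + t • v) := by continuity
      simpa using hc.tendsto (0 : ℝ)
    have hf : HasDerivAt (fun t : ℝ => x - p (x + t • v)) (-(p' v)) 0 := by
      have hl : HasDerivAt (fun t : ℝ => x + t • v) v 0 := by
        simpa using ((hasDerivAt_id (0:ℝ)).smul_const v).const_add x
      have hp0 : HasFDerivAt p p' (x + (0:ℝ) • v) := by simpa using hp
      have hpl : HasDerivAt (fun t : ℝ => p (x + t • v)) (p' v) 0 :=
        hp0.comp_hasDerivAt 0 hl
      exact ((hasDerivAt_const (0:ℝ) x).sub hpl).congr_deriv (by simp)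
    have hg : HasDerivAt (fun t : ℝ => ‖x - p (x + t • v)‖ ^ 2)
        (2 * ⟪x - p ((0:ℝ) • v + x), -(p' v)⟫) 0 := by
      have := hf.norm_sq
      simpa using this
    have hmin : IsLocalMin (fun t : ℝ => ‖x - p (x + t • v)‖ ^ 2) 0 := by
      filter_upwards [hline.eventually hloc] with t ht
      have h1 : Metric.infDist x Θ ≤ ‖x - p (x + t • v)‖ := by
        rw [← dist_eq_norm]
        exact Metric.infDist_le_dist_of_mem ht.1
      have h0 : ‖x - p (x + (0:ℝ) • v)‖ = Metric.infDist x Θ := by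
        simpa using hnorm
      simp only [h0]
      exact pow_le_pow_left₀ hx.le h1 2
    have hzero := hmin.hasDerivAt_eq_zero hg
    have h2 : (⟪x - p ((0:ℝ) • v + x), -(p' v)⟫ : ℝ) = 0 := by linarith
    have h3 : (⟪x - p x, p' v⟫ : ℝ) = 0 := by
      simpa [inner_neg_right, neg_eq_zero] using h2
    exact h3
  -- derivative of y ↦ ‖y - p y‖
  have hsub : HasFDerivAt (fun y => y - p y)
      (ContinuousLinearMap.id ℝ _ - p') x := (hasFDerivAt_id x).sub hp
  have hcomp := (aux_hasFDerivAt_norm (x - p x) hu).comp x hsub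
  have hL : (innerSL ℝ (‖x - p x‖⁻¹ • (x - p x))).comp (ContinuousLinearMap.id ℝ _ - p')
      = innerSL ℝ (‖x - p x‖⁻¹ • (x - p x)) := by
    ext v
    simp only [ContinuousLinearMap.coe_comp', Function.comp_apply, ContinuousLinearMap.coe_sub',
      Pi.sub_apply, ContinuousLinearMap.coe_id', id_eq, innerSL_apply_apply, inner_sub_right,
      real_inner_smul_left, hperp v, mul_zero, sub_zero]
  rw [hL] at hcomp
  exact hcomp.congr_of_eventuallyEq (by filter_upwards [hloc] with y hy using hy.2.symm)
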